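/- Let μ > 0, δ₀ ∈ ℝ, V(t,x) = v̲ + δ₀/√(4πμ(1+t)) exp(−x²/(4μ(1+t))), U = μ V_x. Suppose α : ℝ → ℝ satisfies |x|^{1/2}(α − α̲) ∈ L²(ℝ). Then there exists C > 0 such that for all t ≥ 0, ∫_ℝ (α(x) − α̲)² U(t,x)² dx ≤ C δ₀² (1+t)^{−5/2} ‖|x|^{1/2}(α − α̲)‖_{L²}². -/

import Mathlib

open Real MeasureTheory

lemma key_exp (a x : ℝ) (ha : 0 < a) :
    |x| * Real.exp (-(a * x ^ 2)) ≤ Real.sqrt (1 / a) := by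
  rcases le_or_gt |x| (Real.sqrt (1 / a)) with h | h
  · calc |x| * Real.exp (-(a * x ^ 2)) ≤ |x| * 1 := by
          gcongr
          exact Real.exp_le_one_iff.mpr (by nlinarith [sq_nonneg x])
      _ ≤ Real.sqrt (1 / a) := by simpa using h
  · have hx : 0 < |x| := lt_of_le_of_lt (Real.sqrt_nonneg _) h
    have hx2 : 1 / a < x ^ 2 := by
      have := Real.lt_sq_of_sqrt_lt h
      simpa [sq_abs] using this
    have hax : 0 < a * x ^ 2 := by
      have := mul_lt_mul_of_pos_left hx2 ha
      rw [mul_one_div, div_self ha.ne'] at this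
      linarith
    have hexp : Real.exp (-(a * x ^ 2)) ≤ 1 / (a * x ^ 2) := by
      rw [Real.exp_neg, inv_eq_one_div]
      apply one_div_le_one_div_of_le hax
      linarith [Real.add_one_le_exp (a * x ^ 2)]
    calc |x| * Real.exp (-(a * x ^ 2)) ≤ |x| * (1 / (a * x ^ 2)) := by gcongr
      _ = 1 / (a * |x|) := by
          rw [← sq_abs]
          field_simp
      _ ≤ Real.sqrt (1 / a) := by
          rw [div_le_iff₀ (by positivity)]
          have h2 : Real.sqrt (1/a) * (a * Real.sqrt (1/a)) = 1 := by
            rw [show Real.sqrt (1/a) * (a * Real.sqrt (1/a)) = (Real.sqrt (1/a) * Real.sqrt (1/a)) * a by ring,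
              Real.mul_self_sqrt (by positivity)]
            field_simp
          nlinarith [Real.sqrt_nonneg (1/a), h.le]

lemma derivV (μ δ₀ vbar r : ℝ) (x : ℝ) :
    deriv (fun y : ℝ => vbar + δ₀ / Real.sqrt (4 * Real.pi * μ * r) *
        Real.exp (-(y ^ 2) / (4 * μ * r))) x
    = δ₀ / Real.sqrt (4 * Real.pi * μ * r) *
        (Real.exp (-(x ^ 2) / (4 * μ * r)) * (-(2 * x) / (4 * μ * r))) := by
  have h1 : HasDerivAt (fun y : ℝ => -(y ^ 2) / (4 * μ * r))
      (-(2 * x) / (4 * μ * r)) x := by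
    have := ((hasDerivAt_pow 2 x).neg).div_const (4 * μ * r)
    simpa using this
  have h2 := h1.exp
  have h3 := h2.const_mul (δ₀ / Real.sqrt (4 * Real.pi * μ * r))
  have h4 := h3.const_add vbar
  simpa [mul_assoc] using h4.deriv

/-- Estimate of the forcing term F₂ = (α − α̲)U:
    ∫ (α − α̲)² U² dx ≤ C δ₀² (1+t)^{-5/2} ‖|x|^{1/2}(α − α̲)‖_{L²}². -/
theorem stmt_9 (μ δ₀ vbar αbar : ℝ) (hμ : 0 < μ) (α : ℝ → ℝ)
    (hαL2 : MemLp (fun x : ℝ => |x| ^ ((1 : ℝ) / 2) * (α x - αbar)) 2 volume)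
    (V U : ℝ → ℝ → ℝ)
    (hV : ∀ t x, V t x =
      vbar + δ₀ / Real.sqrt (4 * Real.pi * μ * (1 + t)) *
        Real.exp (-(x ^ 2) / (4 * μ * (1 + t))))
    (hU : ∀ t x, U t x = μ * deriv (fun y => V t y) x) :
    ∃ C > (0 : ℝ), ∀ t ≥ (0 : ℝ),
      ∫ x : ℝ, (α x - αbar) ^ 2 * (U t x) ^ 2 ≤
        C * δ₀ ^ 2 * (1 + t) ^ (-(5 / 2) : ℝ) *
          ∫ x : ℝ, (|x| ^ ((1 : ℝ) / 2) * (α x - αbar)) ^ 2 := by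
  have hπ := Real.pi_pos
  refine ⟨Real.sqrt (2 * μ) / (16 * Real.pi * μ), by positivity, ?_⟩
  intro t ht
  obtain ⟨r, hrdef, hr⟩ : ∃ r : ℝ, 1 + t = r ∧ 0 < r := ⟨1 + t, rfl, by linarith⟩
  have hV' : ∀ x, V t x = vbar + δ₀ / Real.sqrt (4 * Real.pi * μ * r) *
      Real.exp (-(x ^ 2) / (4 * μ * r)) := by
    intro x; rw [hV, hrdef]
  rw [hrdef]
  have hUsq : ∀ x : ℝ, (U t x) ^ 2
      = δ₀ ^ 2 / (16 * Real.pi * μ * r ^ 3) *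
        (x ^ 2 * Real.exp (-(2 / (4 * μ * r) * x ^ 2))) := by
    intro x
    have hVe : (fun y => V t y) = fun y : ℝ =>
        vbar + δ₀ / Real.sqrt (4 * Real.pi * μ * r) *
          Real.exp (-(y ^ 2) / (4 * μ * r)) := by
      funext y; rw [hV']
    rw [hU, hVe, derivV]
    have hsq : (Real.sqrt (4 * Real.pi * μ * r)) ^ 2 = 4 * Real.pi * μ * r :=
      Real.sq_sqrt (by positivity)
    have hE : Real.exp (-(x ^ 2) / (4 * μ * r)) ^ 2
        = Real.exp (-(2 / (4 * μ * r) * x ^ 2)) := by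
      rw [← Real.exp_nat_mul]
      congr 1
      push_cast
      field_simp
    have expand : (μ * (δ₀ / Real.sqrt (4 * Real.pi * μ * r) *
          (Real.exp (-(x ^ 2) / (4 * μ * r)) * (-(2 * x) / (4 * μ * r))))) ^ 2
        = μ ^ 2 * (δ₀ ^ 2 / (Real.sqrt (4 * Real.pi * μ * r)) ^ 2) *
          Real.exp (-(x ^ 2) / (4 * μ * r)) ^ 2 *
          ((2 * x) ^ 2 / (4 * μ * r) ^ 2) := by
      ring
    rw [expand, hsq, hE]
    field_simp
    ring
  have h32 : Real.sqrt r / r ^ 3 = r ^ (-(5 / 2) : ℝ) := by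
    rw [Real.sqrt_eq_rpow, ← Real.rpow_natCast r 3, ← Real.rpow_sub hr]
    norm_num
  have hbound : ∀ x : ℝ, (α x - αbar) ^ 2 * (U t x) ^ 2 ≤
      Real.sqrt (2 * μ) / (16 * Real.pi * μ) * δ₀ ^ 2 * r ^ (-(5 / 2) : ℝ) *
        (|x| ^ ((1 : ℝ) / 2) * (α x - αbar)) ^ 2 := by
    intro x
    have habs2 : (|x| ^ ((1 : ℝ) / 2)) ^ 2 = |x| := by
      rw [← Real.rpow_natCast (|x| ^ ((1 : ℝ) / 2)) 2, ← Real.rpow_mul (abs_nonneg x)]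
      norm_num
    rw [mul_pow, habs2]
    have hkey := key_exp (2 / (4 * μ * r)) x (by positivity)
    have hs2 : Real.sqrt (1 / (2 / (4 * μ * r))) = Real.sqrt (2 * μ) * Real.sqrt r := by
      rw [one_div_div, show 4 * μ * r / 2 = (2 * μ) * r by ring,
        Real.sqrt_mul (by positivity)]
    rw [hs2] at hkey
    have hU2 : (U t x) ^ 2 ≤
        Real.sqrt (2 * μ) / (16 * Real.pi * μ) * δ₀ ^ 2 * r ^ (-(5 / 2) : ℝ) * |x| := by
      rw [hUsq x]
      calc δ₀ ^ 2 / (16 * Real.pi * μ * r ^ 3) *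
            (x ^ 2 * Real.exp (-(2 / (4 * μ * r) * x ^ 2)))
          ≤ δ₀ ^ 2 / (16 * Real.pi * μ * r ^ 3) *
            (|x| * (Real.sqrt (2 * μ) * Real.sqrt r)) := by
            apply mul_le_mul_of_nonneg_left _ (by positivity)
            have hxx : x ^ 2 = |x| * |x| := by rw [← sq_abs x]; ring
            calc x ^ 2 * Real.exp (-(2 / (4 * μ * r) * x ^ 2))
                = |x| * (|x| * Real.exp (-(2 / (4 * μ * r) * x ^ 2))) := by
                  nth_rewrite 1 [hxx]; ring
              _ ≤ |x| * (Real.sqrt (2 * μ) * Real.sqrt r) :=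
                  mul_le_mul_of_nonneg_left hkey (abs_nonneg x)
        _ = Real.sqrt (2 * μ) / (16 * Real.pi * μ) * δ₀ ^ 2 *
              (Real.sqrt r / r ^ 3) * |x| := by
            ring
        _ = Real.sqrt (2 * μ) / (16 * Real.pi * μ) * δ₀ ^ 2 * r ^ (-(5 / 2) : ℝ) * |x| := by
            rw [h32]
    calc (α x - αbar) ^ 2 * (U t x) ^ 2
        ≤ (α x - αbar) ^ 2 *
          (Real.sqrt (2 * μ) / (16 * Real.pi * μ) * δ₀ ^ 2 * r ^ (-(5 / 2) : ℝ) * |x|) :=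
          mul_le_mul_of_nonneg_left hU2 (sq_nonneg _)
      _ = Real.sqrt (2 * μ) / (16 * Real.pi * μ) * δ₀ ^ 2 * r ^ (-(5 / 2) : ℝ) *
          (|x| * (α x - αbar) ^ 2) := by ring
  have hg : Integrable (fun x : ℝ =>
      Real.sqrt (2 * μ) / (16 * Real.pi * μ) * δ₀ ^ 2 * r ^ (-(5 / 2) : ℝ) *
        (|x| ^ ((1 : ℝ) / 2) * (α x - αbar)) ^ 2) volume :=
    (hαL2.integrable_sq).const_mul _
  refine le_trans (integral_mono_of_nonneg ?_ hg ?_) ?_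
  · filter_upwards with x
    positivity
  · filter_upwards with x
    have h := hbound x
    calc (α x - αbar) ^ 2 * (U t x) ^ 2
        ≤ Real.sqrt (2 * μ) / (16 * Real.pi * μ) * δ₀ ^ 2 * r ^ (-(5 / 2) : ℝ) *
          (|x| ^ ((1 : ℝ) / 2) * (α x - αbar)) ^ 2 := h
      _ = _ := by ring
  · exact le_of_eq (integral_const_mul _ _)
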